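/- For n ≥ 7, if π is chosen uniformly at random from the alternating group A_n, K_max is the largest conjugacy class of S_n contained in A_n, and K is any other conjugacy class of S_n contained in A_n, then Pr(π ∈ K_max) − Pr(π ∈ K) ≥ (n − 6) / (n(n − 3)). -/

import Mathlib

open Equiv

/-- A subset of a group is a conjugacy class if it is the set of elements conjugate to
some fixed element. -/
def IsConjClass {G : Type*} [Group G] (C : Set G) : Prop :=
  ∃ σ : G, C = {τ | IsConj σ τ}

open Equiv.Perm

lemma aux_sum_le_prod (t : Multiset ℕ) (h : ∀ x ∈ t, 2 ≤ x) :
    t.sum ≤ t.prod ∧ (t ≠ 0 → 2 ≤ t.prod) := by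
  induction t using Multiset.induction with
  | empty => simp
  | cons a t ih =>
    have ha : 2 ≤ a := h a (Multiset.mem_cons_self a t)
    obtain ⟨h1, h2⟩ := ih (fun x hx => h x (Multiset.mem_cons_of_mem hx))
    simp only [Multiset.sum_cons, Multiset.prod_cons]
    by_cases ht : t = 0
    · subst ht; simp; omega
    · have h2' := h2 ht
      constructor
      · nlinarith
      · intro _; nlinarith

lemma aux_numeric (n : ℕ) (hn : 7 ≤ n) (l : Multiset ℕ) (h2 : ∀ x ∈ l, 2 ≤ x)
    (hsum : l.sum ≤ n) (hne1 : l ≠ {n}) (hne2 : l ≠ {n - 1}) :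
    2 * (n - 3) ≤ l.prod * (n - l.sum).factorial := by
  rcases Nat.lt_or_ge (Multiset.card l) 2 with hc | hc
  · interval_cases hcard : Multiset.card l
    · rw [Multiset.card_eq_zero] at hcard
      subst hcard
      simp only [Multiset.prod_zero, Multiset.sum_zero, Nat.sub_zero, one_mul]
      obtain ⟨m, rfl⟩ : ∃ m, n = m + 7 := ⟨n - 7, by omega⟩
      have h3 : m + 7 - 3 = m + 4 := by omega
      rw [h3]
      calc 2 * (m + 4) ≤ (m + 7) * (m + 6) := by nlinarith
        _ ≤ (m + 7) * (m + 6).factorial :=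
            Nat.mul_le_mul_left _ (Nat.self_le_factorial _)
        _ = (m + 7).factorial := (Nat.factorial_succ _).symm
    · rw [Multiset.card_eq_one] at hcard
      obtain ⟨a, rfl⟩ := hcard
      simp only [Multiset.sum_singleton, Multiset.prod_singleton] at *
      have ha : 2 ≤ a := h2 a (Multiset.mem_singleton_self a)
      have hne1' : a ≠ n := fun h => hne1 (by rw [h])
      have hne2' : a ≠ n - 1 := fun h => hne2 (by rw [h])
      have han : a + 2 ≤ n := by omega
      obtain ⟨b, rfl⟩ : ∃ b, a = b + 2 := ⟨a - 2, by omega⟩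
      obtain ⟨f, hf⟩ : ∃ f, n - (b + 2) = f + 2 := ⟨n - b - 4, by omega⟩
      rw [hf]
      have h3 : n - 3 = b + f + 1 := by omega
      rw [h3]
      calc 2 * (b + f + 1) ≤ (b + 2) * ((f + 2) * (f + 1)) := by nlinarith [Nat.zero_le (b*f*f), Nat.zero_le (b*f), Nat.zero_le (f*f)]
        _ ≤ (b + 2) * (f + 2).factorial := by
            refine Nat.mul_le_mul_left _ ?_
            calc (f + 2) * (f + 1) ≤ (f + 2) * (f + 1).factorial :=
              Nat.mul_le_mul_left _ (Nat.self_le_factorial _)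
              _ = (f + 2).factorial := (Nat.factorial_succ _).symm
  · -- at least two parts
    have hl0 : l ≠ 0 := by rintro rfl; simp at hc
    obtain ⟨a, ha'⟩ := Multiset.exists_mem_of_ne_zero hl0
    obtain ⟨t, rfl⟩ : ∃ t, l = a ::ₘ t := ⟨l.erase a, (Multiset.cons_erase ha').symm⟩
    have ht0 : t ≠ 0 := by rintro rfl; simp at hc
    have ha : 2 ≤ a := h2 a (Multiset.mem_cons_self a t)
    obtain ⟨hts, htp⟩ := aux_sum_le_prod t (fun x hx => h2 x (Multiset.mem_cons_of_mem hx))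
    have htp2 := htp ht0
    have hts2 : 2 ≤ t.sum := by
      obtain ⟨b, hb⟩ := Multiset.exists_mem_of_ne_zero ht0
      calc 2 ≤ b := h2 b (Multiset.mem_cons_of_mem hb)
        _ ≤ t.sum := Multiset.le_sum_of_mem hb
    simp only [Multiset.sum_cons, Multiset.prod_cons] at *
    have hkey : 2 * a + 2 * t.sum ≤ a * t.prod + 4 := by nlinarith
    obtain ⟨s4, hS⟩ : ∃ s4, a + t.sum = s4 + 4 := ⟨a + t.sum - 4, by omega⟩
    have hP : 2 * s4 + 4 ≤ a * t.prod := by omega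
    rcases Nat.eq_zero_or_pos (n - (a + t.sum)) with hf0 | hfpos
    · rw [hf0]
      simp only [Nat.factorial_zero, mul_one]
      have h3 : n - 3 = s4 + 1 := by omega
      rw [h3]; omega
    · obtain ⟨f1, hf⟩ : ∃ f1, n - (a + t.sum) = f1 + 1 := ⟨n - (a + t.sum) - 1, by omega⟩
      rw [hf]
      have h3 : n - 3 = s4 + f1 + 2 := by omega
      rw [h3]
      have hfac : f1 + 1 ≤ (f1 + 1).factorial := Nat.self_le_factorial _
      calc 2 * (s4 + f1 + 2) ≤ (2 * s4 + 4) * (f1 + 1) := by nlinarith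
        _ ≤ (a * t.prod) * (f1 + 1) := Nat.mul_le_mul_right _ hP
        _ ≤ (a * t.prod) * (f1 + 1).factorial := Nat.mul_le_mul_left _ hfac

open Equiv Equiv.Perm

/-- the subgroup of permutations fixing every point of `s` -/
def permFixing {β : Type*} [DecidableEq β] (s : Finset β) : Subgroup (Equiv.Perm β) where
  carrier := {p | ∀ x ∈ s, p x = x}
  one_mem' := by intro x _; rfl
  mul_mem' := by
    intro p q hp hq x hx
    simp only [Set.mem_setOf_eq] at *
    rw [Equiv.Perm.mul_apply, hq x hx, hp x hx]
  inv_mem' := by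
    intro p hp x hx
    simp only [Set.mem_setOf_eq] at *
    have := hp x hx
    conv_lhs => rw [← this]
    exact p.symm_apply_apply x

lemma mem_permFixing {β : Type*} [DecidableEq β] {s : Finset β} {p : Equiv.Perm β} :
    p ∈ permFixing s ↔ ∀ x ∈ s, p x = x := Iff.rfl

lemma aux_indep {β : Type*} [DecidableEq β] {ι : Type*}
    (H : ι → Subgroup (Equiv.Perm β)) (T : ι → Finset β)
    (hsupp : ∀ i, ∀ p ∈ H i, ∀ x, x ∉ T i → p x = x)
    (hdisj : Pairwise (Function.onFun _root_.Disjoint T)) : iSupIndep H := by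
  intro i
  have hsup : (⨆ (j) (_ : j ≠ i), H j) ≤ permFixing (T i) := by
    refine iSup_le fun j => iSup_le fun hji => fun p hp => ?_
    rw [mem_permFixing]
    intro x hx
    exact hsupp j p hp x (Finset.disjoint_right.mp (hdisj hji) hx)
  refine Disjoint.mono_right hsup (Subgroup.disjoint_def.mpr ?_)
  intro p hp hfix
  ext x
  by_cases hx : x ∈ T i
  · exact mem_permFixing.mp hfix x hx
  · exact hsupp i p hp x hx

lemma aux_centralizer_lower {m : ℕ} (g : Equiv.Perm (Fin m)) :
    g.cycleType.prod * (m - g.support.card).factorial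
      ≤ Nat.card (Subgroup.centralizer {g}) := by
  classical
  set s := g.cycleFactorsFinset with hs
  have hsub : ∀ c ∈ s, Equiv.Perm.support c ≤ g.support :=
    fun c hc => mem_cycleFactorsFinset_support_le hc
  have hpair : (s : Set (Equiv.Perm (Fin m))).Pairwise Equiv.Perm.Disjoint :=
    g.cycleFactorsFinset_pairwise_disjoint
  have hcommg : ∀ c ∈ s, Commute c g := fun c hc => self_mem_cycle_factors_commute hc
  have horder : ∀ c ∈ s, orderOf c = c.support.card :=
    fun c hc => (mem_cycleFactorsFinset_iff.mp hc).1.orderOf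
  have hct : g.cycleType = s.1.map (Finset.card ∘ Equiv.Perm.support) := cycleType_def g
  clear_value s
  clear hs
  let pred : Fin m → Prop := fun x => x ∈ (g.supportᶜ : Finset (Fin m))
  let H : Option {c // c ∈ s} → Subgroup (Equiv.Perm (Fin m)) := fun i => match i with
    | none => (ofSubtype : Equiv.Perm {x // pred x} →* Equiv.Perm (Fin m)).range
    | some c => Subgroup.zpowers (c : Equiv.Perm (Fin m))
  let T : Option {c // c ∈ s} → Finset (Fin m) := fun i => match i with
    | none => g.supportᶜ
    | some c => (c : Equiv.Perm (Fin m)).support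
  have hsupp : ∀ i, ∀ p ∈ H i, ∀ x, x ∉ T i → p x = x := by
    rintro (_ | c) p hp x hx
    · obtain ⟨e, rfl⟩ := hp
      exact ofSubtype_apply_of_not_mem e hx
    · obtain ⟨k, rfl⟩ := hp
      have := support_zpow_le (c : Equiv.Perm (Fin m)) k
      exact notMem_support.mp fun hmem => hx (this hmem)
  have hdisj : Pairwise (Function.onFun _root_.Disjoint T) := by
    rintro (_ | c) (_ | d) hne
    · exact absurd rfl hne
    · exact (disjoint_compl_right.mono_left (hsub d d.2)).symm
    · exact disjoint_compl_right.mono_left (hsub c c.2)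
    · have hcd : (c : Equiv.Perm (Fin m)) ≠ d := by
        intro h; exact hne (by rw [Subtype.ext h])
      exact (hpair c.2 d.2 hcd).disjoint_support
  have hcomm : Pairwise fun i j => ∀ x y : Equiv.Perm (Fin m),
      x ∈ H i → y ∈ H j → Commute x y := by
    intro i j hij x y hx hy
    refine Equiv.Perm.Disjoint.commute (fun a => ?_)
    by_cases ha : a ∈ T i
    · exact Or.inr (hsupp j y hy a (Finset.disjoint_left.mp (hdisj hij) ha))
    · exact Or.inl (hsupp i x hx a ha)
  have hind : iSupIndep H := aux_indep H T hsupp hdisj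
  have hle : ∀ i, H i ≤ Subgroup.centralizer {g} := by
    rintro (_ | c) p hp
    · obtain ⟨e, rfl⟩ := hp
      rw [Subgroup.mem_centralizer_singleton_iff]
      refine Equiv.Perm.Disjoint.commute (fun a => ?_)
      by_cases ha : a ∈ g.support
      · exact Or.inl (ofSubtype_apply_of_not_mem e (by simpa [pred] using ha))
      · exact Or.inr (notMem_support.mp ha)
    · obtain ⟨k, rfl⟩ := hp
      rw [Subgroup.mem_centralizer_singleton_iff]
      exact ((hcommg c c.2).zpow_left k)
  let φ := Subgroup.noncommPiCoprod hcomm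
  have hφinj : Function.Injective φ := Subgroup.injective_noncommPiCoprod_of_iSupIndep hind
  have hφmem : ∀ v, φ v ∈ Subgroup.centralizer {g} := by
    intro v
    have h1 : φ v ∈ φ.range := ⟨v, rfl⟩
    rw [Subgroup.noncommPiCoprod_range] at h1
    exact iSup_le hle h1
  have hinj : Function.Injective
      (fun v : (∀ i, H i) => (⟨φ v, hφmem v⟩ : Subgroup.centralizer {g})) := by
    intro v w h
    exact hφinj (congrArg Subtype.val h)
  have hcard := Nat.card_le_card_of_injective _ hinj
  rw [Nat.card_pi] at hcard
  have hofinj : Function.Injective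
      (ofSubtype : Equiv.Perm {x // pred x} →* Equiv.Perm (Fin m)) := by
    intro a b hab
    refine Equiv.ext fun x => Subtype.ext ?_
    rw [← ofSubtype_apply_coe a x, ← ofSubtype_apply_coe b x, hab]
  have hnone : Nat.card (H none) = (m - g.support.card).factorial := by
    have h1 : Nat.card (H none) = Nat.card (Equiv.Perm {x // pred x}) := by
      refine Nat.card_congr ((Equiv.setCongr ?_).trans (Equiv.ofInjective _ hofinj).symm)
      exact MonoidHom.coe_range _
    rw [h1, Nat.card_eq_fintype_card, Fintype.card_perm]
    congr 1
    have h3 : Fintype.card {x // pred x} = (g.supportᶜ : Finset (Fin m)).card :=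
      Fintype.card_coe _
    rw [h3, Finset.card_compl, Fintype.card_fin]
  have hsome : ∏ c : {c // c ∈ s}, Nat.card (H (some c)) = g.cycleType.prod := by
    have h2 : ∀ c : {c // c ∈ s},
        Nat.card (H (some c)) = (c : Equiv.Perm (Fin m)).support.card := by
      intro c
      have h4 : Nat.card (H (some c)) = orderOf (c : Equiv.Perm (Fin m)) := Nat.card_zpowers _
      rw [h4, horder c c.2]
    calc ∏ c : {c // c ∈ s}, Nat.card (H (some c))
        = ∏ c : {c // c ∈ s}, (Finset.card ∘ Equiv.Perm.support) (c : Equiv.Perm (Fin m)) :=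
          Finset.prod_congr rfl fun c _ => h2 c
      _ = ∏ c ∈ s, (Finset.card ∘ Equiv.Perm.support) c := Finset.prod_coe_sort s _
      _ = g.cycleType.prod := by rw [hct, Finset.prod_eq_multiset_prod]
  rw [Fintype.prod_option, hnone, hsome, mul_comm] at hcard
  exact hcard

lemma aux_centralizer_le_of_cycle {m : ℕ} {c : Equiv.Perm (Fin m)} (hc : c.IsCycle)
    (hbig : m ≤ c.support.card + 1) :
    Nat.card (Subgroup.centralizer {c}) ≤ c.support.card := by
  classical
  have hle : Subgroup.centralizer {c} ≤ Subgroup.zpowers c := by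
    intro p hp
    have hcomm : Commute p c := Subgroup.mem_centralizer_singleton_iff.mp hp
    rw [hc.commute_iff] at hcomm
    obtain ⟨hc', hz⟩ := hcomm
    have hpe : p = ofSubtype (p.subtypePerm hc') := by
      ext x
      by_cases hx : x ∈ c.support
      · rw [ofSubtype_subtypePerm_of_mem hc' hx]
      · rw [ofSubtype_subtypePerm_of_not_mem hc' hx]
        by_contra hne
        have hx2 : p x ∉ c.support := fun h => hx ((hc' x).mp h)
        have hcc : (c.supportᶜ : Finset (Fin m)).card ≤ 1 := by
          rw [Finset.card_compl, Fintype.card_fin]; omega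
        exact hne (congrArg Fin.val (Finset.card_le_one.mp hcc _
          (Finset.mem_compl.mpr hx2) _ (Finset.mem_compl.mpr hx)))
    rw [hpe]; exact hz
  calc Nat.card (Subgroup.centralizer {c}) ≤ Nat.card (Subgroup.zpowers c) :=
        Subgroup.card_le_of_le hle
    _ = orderOf c := Nat.card_zpowers c
    _ = c.support.card := hc.orderOf

lemma aux_orbit_stabilizer {m : ℕ} (g : Equiv.Perm (Fin m)) :
    ({τ | IsConj g τ} : Set (Equiv.Perm (Fin m))).ncard
      * Nat.card (Subgroup.centralizer {g}) = m.factorial := by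
  classical
  have h1 : ({τ | IsConj g τ} : Set (Equiv.Perm (Fin m)))
      = MulAction.orbit (ConjAct (Equiv.Perm (Fin m))) g := by
    ext τ
    rw [Set.mem_setOf_eq, ConjAct.mem_orbit_conjAct, isConj_comm]
  have h2 : Nat.card (Subgroup.centralizer {g})
      = Nat.card (MulAction.stabilizer (ConjAct (Equiv.Perm (Fin m))) g) := by
    rw [Subgroup.centralizer_eq_comap_stabilizer]
    refine Nat.card_congr ⟨fun x => ⟨ConjAct.toConjAct (x : Equiv.Perm (Fin m)),
      Subgroup.mem_comap.mp x.2⟩,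
      fun y => ⟨ConjAct.ofConjAct (y : ConjAct (Equiv.Perm (Fin m))),
        Subgroup.mem_comap.mpr (by have := y.2; rw [MulAction.mem_stabilizer_iff] at this; exact this)⟩, fun x => Subtype.ext (by simp), fun y => by simp⟩
  haveI : Fintype (MulAction.orbit (ConjAct (Equiv.Perm (Fin m))) g) := Fintype.ofFinite _
  haveI : Fintype (MulAction.stabilizer (ConjAct (Equiv.Perm (Fin m))) g) := Fintype.ofFinite _
  have h3 := MulAction.card_orbit_mul_card_stabilizer_eq_card_group
    (ConjAct (Equiv.Perm (Fin m))) g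
  rw [← Nat.card_coe_set_eq, h1, h2]
  rw [Nat.card_eq_fintype_card, Nat.card_eq_fintype_card]
  have h4 : Fintype.card (ConjAct (Equiv.Perm (Fin m))) = m.factorial := by
    rw [← Nat.card_eq_fintype_card]
    rw [Nat.card_congr (ConjAct.toConjAct (G := Equiv.Perm (Fin m))).toEquiv.symm]
    rw [Nat.card_eq_fintype_card, Fintype.card_perm, Fintype.card_fin]
  rw [← h4]
  exact h3


set_option maxHeartbeats 1000000 in
/-- For `n ≥ 7`, if `π` is uniform on `A_n`, `Kmax` is the largest conjugacy class of `S_n`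
contained in `A_n` and `K` is any other conjugacy class of `S_n` contained in `A_n`, then
`Pr(π ∈ Kmax) − Pr(π ∈ K) ≥ (n − 6)/(n(n − 3))`. -/
theorem stmt_3 (n : ℕ) (hn : 7 ≤ n) (Kmax K : Set (Equiv.Perm (Fin n)))
    (hKmaxConj : IsConjClass Kmax)
    (hKmaxA : Kmax ⊆ (alternatingGroup (Fin n) : Set (Equiv.Perm (Fin n))))
    (hmax : ∀ C : Set (Equiv.Perm (Fin n)), IsConjClass C →
      C ⊆ (alternatingGroup (Fin n) : Set (Equiv.Perm (Fin n))) →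
      Set.ncard C ≤ Set.ncard Kmax)
    (hKConj : IsConjClass K)
    (hKA : K ⊆ (alternatingGroup (Fin n) : Set (Equiv.Perm (Fin n))))
    (hne : K ≠ Kmax) :
    (Set.ncard Kmax : ℚ) / (Nat.card (alternatingGroup (Fin n)) : ℚ)
      - (Set.ncard K : ℚ) / (Nat.card (alternatingGroup (Fin n)) : ℚ)
      ≥ ((n : ℚ) - 6) / ((n : ℚ) * ((n : ℚ) - 3)) := by
  classical
  obtain ⟨m, rfl⟩ : ∃ m, n = m + 1 := ⟨n - 1, by omega⟩
  have hm : 6 ≤ m := by omega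
  -- the long cycle σ₀
  set i₀ : Fin (m + 1) := if Even m then ⟨m, by omega⟩ else ⟨m - 1, by omega⟩ with hi₀
  have hival : (i₀ : ℕ) = if Even m then m else m - 1 := by
    rcases Nat.even_or_odd m with h | h
    · simp [hi₀, h]
    · simp [hi₀, Nat.not_even_iff_odd.mpr h]
  have hi₀ne : i₀ ≠ 0 := by
    intro hcon
    have h0 := congrArg Fin.val hcon
    rw [hival] at h0
    simp only [Fin.val_zero] at h0
    split at h0 <;> omega
  set σ₀ := Fin.cycleRange i₀ with hσ₀
  have hσ₀cyc : σ₀.IsCycle := Fin.isCycle_cycleRange hi₀ne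
  have hσ₀ct : σ₀.cycleType = {(i₀ : ℕ) + 1} := Fin.cycleType_cycleRange hi₀ne
  have hi₀even : Even (i₀ : ℕ) := by
    rw [hival]
    rcases Nat.even_or_odd m with h | h
    · rwa [if_pos h]
    · rw [if_neg (Nat.not_even_iff_odd.mpr h), Nat.even_iff]
      rw [Nat.odd_iff] at h
      omega
  have hσ₀sign : Equiv.Perm.sign σ₀ = 1 := by
    rw [hσ₀, Fin.sign_cycleRange]
    exact hi₀even.neg_one_pow
  have hσ₀supp : σ₀.support.card = (i₀ : ℕ) + 1 := by
    have h := Equiv.Perm.sum_cycleType σ₀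
    rw [hσ₀ct] at h
    simpa using h.symm
  have hi₀ge : m - 1 ≤ (i₀ : ℕ) := by rw [hival]; split <;> omega
  have hi₀le : (i₀ : ℕ) ≤ m := by rw [hival]; split <;> omega
  -- even permutations have even cycle type signature
  have hpar : ∀ g : Equiv.Perm (Fin (m + 1)), Equiv.Perm.sign g = 1 →
      Even (g.cycleType.sum + Multiset.card g.cycleType) := by
    intro g hg
    rw [Equiv.Perm.sign_of_cycleType] at hg
    exact (neg_one_pow_eq_one_iff_even (by decide : (-1 : ℤˣ) ≠ 1)).mp hg
  -- centralizer lower bound for even permutations not of the maximal type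
  have bigbound : ∀ g : Equiv.Perm (Fin (m + 1)), Equiv.Perm.sign g = 1 →
      g.cycleType ≠ σ₀.cycleType →
      2 * (m - 2) ≤ Nat.card (Subgroup.centralizer {g}) := by
    intro g hg hct
    have hparg := hpar g hg
    have hne1 : g.cycleType ≠ {m + 1} := by
      intro hcon
      rcases Nat.even_or_odd m with h | h
      · apply hct
        rw [hcon, hσ₀ct, hival, if_pos h]
      · exfalso
        rw [hcon] at hparg
        simp only [Multiset.sum_singleton, Multiset.card_singleton] at hparg
        rw [Nat.even_iff] at hparg
        rw [Nat.odd_iff] at h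
        omega
    have hne2 : g.cycleType ≠ {m + 1 - 1} := by
      intro hcon
      rcases Nat.even_or_odd m with h | h
      · exfalso
        rw [hcon] at hparg
        simp only [Multiset.sum_singleton, Multiset.card_singleton] at hparg
        rw [Nat.even_iff] at hparg
        rw [Nat.even_iff] at h
        omega
      · apply hct
        rw [hcon, hσ₀ct, hival, if_neg (Nat.not_even_iff_odd.mpr h)]
        congr 1
        omega
    have hsum : g.cycleType.sum ≤ m + 1 := by
      rw [Equiv.Perm.sum_cycleType]
      calc g.support.card ≤ Fintype.card (Fin (m + 1)) := Finset.card_le_univ _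
        _ = m + 1 := Fintype.card_fin _
    have hnum := aux_numeric (m + 1) (by omega) g.cycleType
      (fun x hx => Equiv.Perm.two_le_of_mem_cycleType hx) hsum hne1 hne2
    have hrw : m + 1 - 3 = m - 2 := by omega
    rw [hrw] at hnum
    refine le_trans ?_ (aux_centralizer_lower g)
    rwa [← Equiv.Perm.sum_cycleType]
  -- representatives
  obtain ⟨ρ, hK⟩ := hKConj
  obtain ⟨τ₀, hKmax⟩ := hKmaxConj
  have hρmem : ρ ∈ K := by rw [hK]; exact IsConj.refl ρ
  have hτ₀mem : τ₀ ∈ Kmax := by rw [hKmax]; exact IsConj.refl τ₀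
  have hρsign : Equiv.Perm.sign ρ = 1 := Equiv.Perm.mem_alternatingGroup.mp (hKA hρmem)
  have hτ₀sign : Equiv.Perm.sign τ₀ = 1 := Equiv.Perm.mem_alternatingGroup.mp (hKmaxA hτ₀mem)
  -- sign is a conjugacy invariant
  have hsignconj : ∀ g τ : Equiv.Perm (Fin (m + 1)), IsConj g τ →
      Equiv.Perm.sign τ = Equiv.Perm.sign g := by
    intro g τ h
    rw [Equiv.Perm.sign_of_cycleType, Equiv.Perm.sign_of_cycleType,
      Equiv.Perm.isConj_iff_cycleType_eq.mp h]
  -- the class of σ₀ is contained in the alternating group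
  have hclassA : ({τ | IsConj σ₀ τ} : Set (Equiv.Perm (Fin (m + 1))))
      ⊆ (alternatingGroup (Fin (m + 1)) : Set (Equiv.Perm (Fin (m + 1)))) := by
    intro τ hτ
    have : Equiv.Perm.sign τ = 1 := by rw [hsignconj σ₀ τ hτ, hσ₀sign]
    exact Equiv.Perm.mem_alternatingGroup.mpr this
  have hOSσ₀ := aux_orbit_stabilizer σ₀
  have hZ0le : Nat.card (Subgroup.centralizer {σ₀}) ≤ m + 1 := by
    refine le_trans (aux_centralizer_le_of_cycle hσ₀cyc ?_) ?_ <;> rw [hσ₀supp] <;> omega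
  have hmaxσ₀ := hmax {τ | IsConj σ₀ τ} ⟨σ₀, rfl⟩ hclassA
  -- τ₀ has the same cycle type as σ₀
  have hτ₀ct : τ₀.cycleType = σ₀.cycleType := by
    by_contra hcon
    have hZτ := bigbound τ₀ hτ₀sign hcon
    have e1 : Set.ncard Kmax * Nat.card (Subgroup.centralizer {τ₀}) = (m + 1).factorial := by
      rw [hKmax]; exact aux_orbit_stabilizer τ₀
    have hlt : Nat.card (Subgroup.centralizer {σ₀})
        < Nat.card (Subgroup.centralizer {τ₀}) := by omega
    have hKcpos : 0 < Set.ncard Kmax := by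
      rcases Nat.eq_zero_or_pos (Set.ncard Kmax) with h | h
      · rw [h, zero_mul] at e1; exact absurd e1.symm (Nat.factorial_ne_zero _)
      · exact h
    have hgt : Set.ncard Kmax < ({τ | IsConj σ₀ τ} : Set (Equiv.Perm (Fin (m + 1)))).ncard := by
      have := e1.trans hOSσ₀.symm
      nlinarith
    omega
  -- hence Kmax is the class of σ₀
  have hKmaxeq : Kmax = ({τ | IsConj σ₀ τ} : Set (Equiv.Perm (Fin (m + 1)))) := by
    have hconj : IsConj σ₀ τ₀ := Equiv.Perm.isConj_iff_cycleType_eq.mpr hτ₀ct.symm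
    rw [hKmax]
    ext τ
    exact ⟨fun h => hconj.trans h, fun h => hconj.symm.trans h⟩
  -- ρ is not of the maximal type
  have hρct : ρ.cycleType ≠ σ₀.cycleType := by
    intro h
    apply hne
    have hconj : IsConj σ₀ ρ := Equiv.Perm.isConj_iff_cycleType_eq.mpr h.symm
    rw [hK, hKmaxeq]
    ext τ
    exact ⟨fun hh => hconj.trans hh, fun hh => hconj.symm.trans hh⟩
  have hZρ := bigbound ρ hρsign hρct
  have eK : Set.ncard K * Nat.card (Subgroup.centralizer {ρ}) = (m + 1).factorial := by
    rw [hK]; exact aux_orbit_stabilizer ρ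
  have eKmax : Set.ncard Kmax * Nat.card (Subgroup.centralizer {σ₀}) = (m + 1).factorial := by
    rw [hKmaxeq]; exact hOSσ₀
  -- cardinality of the alternating group
  haveI : Nontrivial (Fin (m + 1)) := by
    refine ⟨⟨0, by omega⟩, ⟨1, by omega⟩, ?_⟩
    intro h
    have := congrArg Fin.val h
    simp at this
  have hA : 2 * Nat.card (alternatingGroup (Fin (m + 1))) = (m + 1).factorial := by
    have h := two_mul_card_alternatingGroup (α := Fin (m + 1))
    rw [Fintype.card_perm, Fintype.card_fin] at h
    rw [Nat.card_eq_fintype_card]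
    exact h
  -- pass to the rationals
  set a : ℚ := (Set.ncard Kmax : ℚ) with ha
  set b : ℚ := (Set.ncard K : ℚ) with hb
  set z0 : ℚ := (Nat.card (Subgroup.centralizer {σ₀}) : ℚ) with hz0
  set zr : ℚ := (Nat.card (Subgroup.centralizer {ρ}) : ℚ) with hzr
  set A : ℚ := (Nat.card (alternatingGroup (Fin (m + 1))) : ℚ) with hA'
  set F : ℚ := ((m + 1).factorial : ℚ) with hF
  have hFpos : 0 < F := by rw [hF]; exact_mod_cast Nat.factorial_pos _
  have hq1 : a * z0 = F := by rw [ha, hz0, hF]; exact_mod_cast eKmax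
  have hq2 : b * zr = F := by rw [hb, hzr, hF]; exact_mod_cast eK
  have hqA : 2 * A = F := by rw [hA', hF]; exact_mod_cast hA
  have hz0le : z0 ≤ (m : ℚ) + 1 := by rw [hz0]; exact_mod_cast hZ0le
  have hzrge : 2 * ((m : ℚ) - 2) ≤ zr := by
    rw [hzr]
    have : ((2 * (m - 2) : ℕ) : ℚ) ≤ ((Nat.card (Subgroup.centralizer {ρ}) : ℕ) : ℚ) := by
      exact_mod_cast hZρ
    calc 2 * ((m : ℚ) - 2) = ((2 * (m - 2) : ℕ) : ℚ) := by
          push_cast [Nat.cast_sub (by omega : 2 ≤ m)]; ring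
      _ ≤ _ := this
  have ha0 : 0 ≤ a := by rw [ha]; positivity
  have hb0 : 0 ≤ b := by rw [hb]; positivity
  have hApos : 0 < A := by linarith
  have hmq : (6 : ℚ) ≤ (m : ℚ) := by exact_mod_cast hm
  -- the main estimate
  have h1 : F ≤ a * ((m : ℚ) + 1) := by
    calc F = a * z0 := hq1.symm
      _ ≤ a * ((m : ℚ) + 1) := mul_le_mul_of_nonneg_left hz0le ha0
  have h2 : b * (2 * ((m : ℚ) - 2)) ≤ F := by
    calc b * (2 * ((m : ℚ) - 2)) ≤ b * zr := mul_le_mul_of_nonneg_left hzrge hb0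
      _ = F := hq2
  rw [ge_iff_le, div_sub_div_same, div_le_div_iff₀ (by push_cast; nlinarith) hApos]
  push_cast
  nlinarith [mul_le_mul_of_nonneg_right h1 (by linarith : (0:ℚ) ≤ (m : ℚ) - 2),
    mul_le_mul_of_nonneg_right h2 (by linarith : (0:ℚ) ≤ (m : ℚ) + 1)]
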